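/- Substituting a_1 = ... = a_n = x into the rotundus yields twice the Chebyshev polynomial of the first kind: R_n(x,...,x) = 2·T_n(x/2), i.e., 2·T_n(y) = R_n(2y,...,2y). -/

import Mathlib

open Matrix

variable {R : Type*} [CommRing R]

/-- The n×n tridiagonal "continuant" matrix with diagonal entries `a 1, ..., a n`
and 1's on the sub- and superdiagonals. -/
def triMat (n : ℕ) (a : ℕ → R) : Matrix (Fin n) (Fin n) R :=
  fun i j =>
    if (i : ℕ) = (j : ℕ) then a (i + 1)
    else if (i : ℕ) + 1 = (j : ℕ) ∨ (j : ℕ) + 1 = (i : ℕ) then 1 else 0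

/-- The continuant `K_n(a_1, ..., a_n)`, as a tridiagonal determinant. -/
def cont (n : ℕ) (a : ℕ → R) : R := (triMat n a).det

/-- The continuant with shifted index: `contE m = K_{m-1}`, so `contE 0 = K_{-1} = 0`. -/
def contE : ℕ → (ℕ → R) → R
  | 0, _ => 0
  | n + 1, a => cont n a

/-- The rotundus `R_n(a_1,...,a_n) = K_n(a_1,...,a_n) - K_{n-2}(a_2,...,a_{n-1})`,
with the conventions `K_{-1} = 0`, `K_0 = 1` (so `R_0 = 1 - (-?) `... for `n ≥ 1` it is
`K_n - K_{n-2}`; `R_0 = 2`). -/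
def rotundus : ℕ → (ℕ → R) → R
  | 0, _ => 2
  | 1, a => a 1
  | n + 2, a => cont (n + 2) a - cont n (fun i => a (i + 1))

/-- The 2×2 matrix `[[x, 1], [-1, 0]]`. -/
def slMat (x : R) : Matrix (Fin 2) (Fin 2) R := !![x, 1; -1, 0]

/-- The product `[[a_1,1],[-1,0]] ⋯ [[a_n,1],[-1,0]]`. -/
def slProd (n : ℕ) (a : ℕ → R) : Matrix (Fin 2) (Fin 2) R :=
  ((List.range n).map (fun i => slMat (a (i + 1)))).prod

lemma coe_succAbove {m : ℕ} (p : Fin (m + 1)) (i : Fin m) :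
    ((p.succAbove i : Fin (m + 1)) : ℕ) = if (i : ℕ) < (p : ℕ) then (i : ℕ) else (i : ℕ) + 1 := by
  by_cases h : (i : ℕ) < (p : ℕ)
  · rw [Fin.succAbove_of_castSucc_lt p i (by simpa [Fin.lt_def] using h)]
    simp [h]
  · rw [Fin.succAbove_of_le_castSucc p i (by simpa [Fin.le_def] using not_lt.mp h)]
    simp [h]

lemma cont_zero (a : ℕ → R) : cont 0 a = 1 := Matrix.det_fin_zero

lemma cont_one (a : ℕ → R) : cont 1 a = a 1 := by
  rw [cont, Matrix.det_fin_one]; simp [triMat]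

lemma cont_rec (n : ℕ) (a : ℕ → R) :
    cont (n + 2) a = a (n + 2) * cont (n + 1) a - cont n a := by
  have hlast : (Fin.last (n + 1)).succAbove = Fin.castSucc := Fin.succAbove_last
  have hlast' : (Fin.last n).succAbove = Fin.castSucc := Fin.succAbove_last
  set j1 : Fin (n + 2) := ⟨n, by omega⟩ with hj1
  have hj1v : (j1 : ℕ) = n := rfl
  -- the minor at (last, n)
  have hminor1 :
      det ((triMat (n + 2) a).submatrix (Fin.last (n+1)).succAbove j1.succAbove) = cont n a := by
    rw [Matrix.det_succ_column _ (Fin.last n)]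
    rw [Fintype.sum_eq_single (Fin.last n)]
    · have hentry : (triMat (n + 2) a).submatrix (Fin.last (n+1)).succAbove j1.succAbove
          (Fin.last n) (Fin.last n) = 1 := by
        simp only [Matrix.submatrix_submatrix, Matrix.submatrix_apply, Function.comp,
          hlast, hlast', triMat, Fin.coe_castSucc, coe_succAbove, hj1v, Fin.val_last,
          lt_self_iff_false, if_false]
        split_ifs <;> first | rfl | omega | (exfalso; omega) | simp_all
      have hsub : ((triMat (n + 2) a).submatrix (Fin.last (n+1)).succAbove
            j1.succAbove).submatrix (Fin.last n).succAbove (Fin.last n).succAbove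
          = triMat n a := by
        ext i j
        have hi : (i : ℕ) < n := i.isLt
        have hj : (j : ℕ) < n := j.isLt
        simp only [Matrix.submatrix_submatrix, Matrix.submatrix_apply, Function.comp,
          hlast, hlast', triMat, Fin.coe_castSucc, coe_succAbove, hj1v, Fin.val_last,
          lt_self_iff_false, if_false]
        split_ifs <;> first | rfl | omega | (exfalso; omega) | simp_all
      rw [hentry, hsub]
      rw [show ((Fin.last n : ℕ) + (Fin.last n : ℕ)) = 2 * n by simp [Fin.val_last]; ring,
        pow_mul]
      simp [cont]
    · intro i hi
      have hival : (i : ℕ) < n + 1 := i.isLt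
      have hine : (i : ℕ) ≠ n := fun h => hi (Fin.ext (by simpa [Fin.val_last] using h))
      have hz : (triMat (n + 2) a).submatrix (Fin.last (n+1)).succAbove j1.succAbove
          i (Fin.last n) = 0 := by
        simp only [Matrix.submatrix_submatrix, Matrix.submatrix_apply, Function.comp,
          hlast, hlast', triMat, Fin.coe_castSucc, coe_succAbove, hj1v, Fin.val_last,
          lt_self_iff_false, if_false]
        split_ifs <;> first | rfl | omega | (exfalso; omega) | simp_all
      rw [hz]; ring
  -- expand along the last row
  have hexp := Matrix.det_succ_row (triMat (n + 2) a) (Fin.last (n + 1))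
  rw [cont, hexp]
  set j2 : Fin (n + 2) := Fin.last (n + 1) with hj2
  have hj2v : (j2 : ℕ) = n + 1 := rfl
  have hne : j1 ≠ j2 := by
    intro h
    have := congrArg (Fin.val) h
    rw [hj1v, hj2v] at this; omega
  rw [show (Finset.univ : Finset (Fin (n+2))) =
      insert j1 {j2} ∪ ((Finset.univ : Finset (Fin (n+2))) \ insert j1 {j2}) by
    simp [Finset.union_sdiff_of_subset]]
  rw [Finset.sum_union (Finset.disjoint_sdiff), Finset.sum_insert (by simp [hne]),
    Finset.sum_singleton]
  have hzero : ∑ j ∈ (Finset.univ \ insert j1 {j2}),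
      (-1 : R) ^ ((j2 : ℕ) + (j : ℕ)) * triMat (n + 2) a j2 j *
        det ((triMat (n + 2) a).submatrix j2.succAbove j.succAbove) = 0 := by
    refine Finset.sum_eq_zero fun j hj => ?_
    simp only [Finset.mem_sdiff, Finset.mem_insert, Finset.mem_singleton] at hj
    have h1 : (j : ℕ) ≠ n := fun h => hj.2 (Or.inl (Fin.ext (by rw [h, hj1v])))
    have h2 : (j : ℕ) ≠ n + 1 := fun h => hj.2 (Or.inr (Fin.ext (by rw [h, hj2v])))
    have hz : triMat (n + 2) a j2 j = 0 := by
      simp only [triMat, hj2v, Fin.val_last]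
      split_ifs <;> first | rfl | (exfalso; omega) | simp_all
    rw [hz]; ring
  rw [hzero, add_zero]
  -- the j2 term
  have hterm2 : (-1 : R) ^ ((j2 : ℕ) + (j2 : ℕ)) *
      triMat (n + 2) a j2 j2 *
      det ((triMat (n + 2) a).submatrix j2.succAbove j2.succAbove)
      = a (n + 2) * cont (n + 1) a := by
    have hd : triMat (n + 2) a j2 j2 = a (n + 2) := by
      simp [triMat, hj2v, Fin.val_last]
    have hsub : (triMat (n + 2) a).submatrix j2.succAbove j2.succAbove
        = triMat (n + 1) a := by
      ext i j
      simp only [Matrix.submatrix_apply, hj2, hlast, Fin.succAbove_last, triMat, Fin.coe_castSucc]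
    rw [hd, hsub, hj2v]
    rw [show (n + 1 + (n + 1)) = 2 * (n + 1) by ring, pow_mul]
    simp [cont]
  have hterm1 : (-1 : R) ^ ((j2 : ℕ) + (j1 : ℕ)) *
      triMat (n + 2) a j2 j1 *
      det ((triMat (n + 2) a).submatrix j2.succAbove j1.succAbove)
      = - cont n a := by
    have hd : triMat (n + 2) a j2 j1 = 1 := by
      have e2 : (j2 : ℕ) = n + 1 := hj2v
      have e1 : (j1 : ℕ) = n := hj1v
      simp only [triMat, e1, e2]
      split_ifs with h h' <;> first | rfl | (exfalso; omega) | simp_all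
    rw [hd, hj2]
    rw [show (Fin.last (n+1)).succAbove = Fin.castSucc from Fin.succAbove_last] at hminor1 ⊢
    rw [hminor1]
    rw [show ((Fin.last (n+1) : ℕ) + (j1 : ℕ)) = 2 * n + 1 by simp [Fin.val_last, hj1v]; ring,
      pow_succ, pow_mul]
    simp
  rw [hterm1, hterm2]
  ring

open Polynomial in
lemma cont_const_chebyshevU (n : ℕ) :
    cont n (fun _ => (2 * X : ℤ[X])) = Polynomial.Chebyshev.U ℤ n := by
  induction n using Nat.strong_induction_on with
  | _ n ih =>
    match n with
    | 0 => simp [cont_zero]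
    | 1 => simp [cont_one, Polynomial.Chebyshev.U_one]
    | n + 2 =>
      rw [cont_rec, ih (n+1) (by omega), ih n (by omega)]
      have h := Polynomial.Chebyshev.U_add_two ℤ n
      push_cast
      linear_combination -h

open Polynomial in
theorem rotundus_eq_two_chebyshevT (n : ℕ) :
    rotundus n (fun _ => (2 * X : ℤ[X])) = 2 * Polynomial.Chebyshev.T ℤ n := by
  match n with
  | 0 => simp [rotundus]
  | 1 => simp [rotundus, Polynomial.Chebyshev.T_one]
  | n + 2 =>
    show cont (n + 2) _ - cont n _ = _
    rw [cont_const_chebyshevU, cont_const_chebyshevU]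
    have h1 := Polynomial.Chebyshev.T_eq_U_sub_X_mul_U ℤ (n + 2)
    have h2 := Polynomial.Chebyshev.U_add_two ℤ n
    push_cast at h1 ⊢
    rw [show ((n : ℤ) + 2 - 1) = (n : ℤ) + 1 by ring] at h1
    linear_combination -2 * h1 - h2
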